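/- Let k = 2^ℓ with ℓ ≥ 2, and let G be a group of order 4k generated by a, b with |a| = 2, |b| = 2k, and a·b = b^{k-1}·a. Then G contains exactly k + 1 elements of order 2. -/
import Mathlib


/-- The group ⟨a, b : a² = 1, b^{2k} = 1, a·b·a⁻¹ = b^{k-1}⟩ of order 4k,
with k = 2^ℓ, ℓ ≥ 2, contains exactly k + 1 elements of order 2. -/
theorem stmt_3 {G : Type*} [Group G] (a b : G) (ℓ k : ℕ) (hℓ : 2 ≤ ℓ) (hk : k = 2 ^ ℓ)
    (hcard : Nat.card G = 4 * k)
    (hgen : Subgroup.closure ({a, b} : Set G) = ⊤)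
    (ha : orderOf a = 2) (hb : orderOf b = 2 * k)
    (hrel : a * b = b ^ (k - 1) * a) :
    Nat.card {g : G // orderOf g = 2} = k + 1 := by
  haveI : Fact (Nat.Prime 2) := ⟨Nat.prime_two⟩
  have hk1 : 1 ≤ k := by
    subst hk; exact Nat.one_le_two_pow
  have hk0 : (k : ℤ) ≠ 0 := by exact_mod_cast Nat.one_le_iff_ne_zero.mp hk1
  have ha2 : a * a = 1 := by
    have h := pow_orderOf_eq_one a
    rw [ha, pow_two] at h
    exact h
  have hainv : a⁻¹ = a := by rw [inv_eq_iff_mul_eq_one, ha2]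
  have hb2k : b ^ (2 * k) = 1 := by rw [← hb]; exact pow_orderOf_eq_one b
  set H := Subgroup.zpowers b with hH
  have hbH : b ∈ H := Subgroup.mem_zpowers b
  have hcardH : Nat.card H = 2 * k := by rw [hH, Nat.card_zpowers, hb]
  haveI hFin : Finite G := Nat.finite_of_card_ne_zero (by omega)
  -- a is not a power of b
  have haH : a ∉ H := by
    intro haH
    have hle : Subgroup.closure ({a, b} : Set G) ≤ H := by
      rw [Subgroup.closure_le]
      intro x hx
      simp only [Set.mem_insert_iff, Set.mem_singleton_iff] at hx
      rcases hx with rfl | rfl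
      · exact haH
      · exact hbH
    rw [hgen, top_le_iff] at hle
    rw [hle, Subgroup.card_top, hcard] at hcardH
    omega
  -- conjugation formulas
  have hconj : ∀ t : ℤ, a * b ^ t * a⁻¹ = b ^ (((k - 1 : ℕ) : ℤ) * t) := by
    intro t
    have h1 : a * b * a⁻¹ = b ^ (k - 1) := by
      rw [hrel, mul_inv_cancel_right]
    calc a * b ^ t * a⁻¹ = (a * b * a⁻¹) ^ t := (conj_zpow).symm
      _ = (b ^ (k - 1 : ℕ)) ^ t := by rw [h1]
      _ = b ^ (((k - 1 : ℕ) : ℤ) * t) := by rw [← zpow_natCast b (k - 1), ← zpow_mul]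
  have hswap : ∀ t : ℤ, a * b ^ t = b ^ (((k - 1 : ℕ) : ℤ) * t) * a := by
    intro t
    rw [← hconj t, inv_mul_cancel_right]
  have hcast : ((k - 1 : ℕ) : ℤ) = (k : ℤ) - 1 := by omega
  -- square formula
  have hsq : ∀ t : ℤ, (b ^ t * a) * (b ^ t * a) = b ^ (t * (k : ℤ)) := by
    intro t
    calc (b ^ t * a) * (b ^ t * a) = b ^ t * (a * b ^ t) * a := by group
      _ = b ^ t * (b ^ (((k - 1 : ℕ) : ℤ) * t) * a) * a := by rw [hswap]
      _ = b ^ (t + ((k - 1 : ℕ) : ℤ) * t) * (a * a) := by rw [zpow_add]; group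
      _ = b ^ (t * (k : ℤ)) := by
          rw [ha2, mul_one]
          congr 1
          rw [hcast]; ring
  have hbz : ∀ t : ℤ, b ^ t = 1 ↔ (2 * (k : ℤ)) ∣ t := by
    intro t
    rw [← orderOf_dvd_iff_zpow_eq_one, hb]
    push_cast
    rfl
  have hconj' : ∀ m : ℤ, a * b ^ m * a = b ^ (((k - 1 : ℕ) : ℤ) * m) := by
    intro m
    have h := hconj m
    rwa [hainv] at h
  -- H is normal
  haveI hnorm : H.Normal := by
    rw [← Subgroup.normalizer_eq_top_iff, eq_top_iff, ← hgen, Subgroup.closure_le]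
    intro x hx
    simp only [Set.mem_insert_iff, Set.mem_singleton_iff] at hx
    rcases hx with rfl | rfl
    · rw [SetLike.mem_coe, Subgroup.mem_normalizer_iff]
      intro h
      constructor
      · intro hh
        obtain ⟨m, rfl⟩ := Subgroup.mem_zpowers_iff.mp hh
        rw [hainv, hconj']
        exact Subgroup.zpow_mem _ hbH _
      · intro hh
        obtain ⟨m, hm⟩ := Subgroup.mem_zpowers_iff.mp hh
        have key : x * b ^ m * x = h := by
          rw [hm, hainv]
          calc x * (x * h * x) * x = (x * x) * h * (x * x) := by group
            _ = h := by rw [ha2, one_mul, mul_one]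
        rw [← key, hconj']
        exact Subgroup.zpow_mem _ hbH _
    · exact Subgroup.le_normalizer hbH
  -- index of H is 2
  have hidx : H.index = 2 := by
    have h1 := Subgroup.card_mul_index H
    rw [hcardH, hcard] at h1
    apply Nat.eq_of_mul_eq_mul_left (show 0 < 2 * k by omega)
    rw [h1]; ring
  have hcardQ : Nat.card (G ⧸ H) = 2 := hidx
  have hπa : ((a : G ⧸ H)) ≠ 1 := by
    rw [Ne, QuotientGroup.eq_one_iff]
    exact haH
  have hπa2 : ((a : G ⧸ H)) ^ 2 = 1 := by
    rw [← QuotientGroup.mk_pow, pow_two, ha2]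
    rfl
  have hordπa : orderOf ((a : G ⧸ H)) = 2 := orderOf_eq_prime hπa2 hπa
  have htop : Subgroup.zpowers ((a : G ⧸ H)) = ⊤ := by
    apply Subgroup.eq_top_of_card_eq
    rw [Nat.card_zpowers, hordπa, hcardQ]
  -- every element outside H has the form b^t * a
  have hform : ∀ g : G, g ∉ H → ∃ t : ℤ, g = b ^ t * a := by
    intro g hg
    have hπg : ((g : G ⧸ H)) ∈ Subgroup.zpowers ((a : G ⧸ H)) := by
      rw [htop]; trivial
    obtain ⟨n, hn⟩ := Subgroup.mem_zpowers_iff.mp hπg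
    have hπa2' : ((a : G ⧸ H)) ^ (2 : ℤ) = 1 := by
      rw [show ((2 : ℤ)) = ((2 : ℕ) : ℤ) by norm_num, zpow_natCast, hπa2]
    rcases Int.even_or_odd n with ⟨u, hu⟩ | ⟨u, hu⟩
    · exfalso
      apply hg
      rw [← QuotientGroup.eq_one_iff g, ← hn, hu,
        show u + u = 2 * u by ring, zpow_mul, hπa2', one_zpow]
    · have heq : ((a : G ⧸ H)) = ((g : G ⧸ H)) := by
        rw [← hn, hu, zpow_add, zpow_mul, hπa2', one_zpow, one_mul, zpow_one]
      have hmem : a⁻¹ * g ∈ H := QuotientGroup.eq.mp heq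
      obtain ⟨m, hm⟩ := Subgroup.mem_zpowers_iff.mp hmem
      refine ⟨((k - 1 : ℕ) : ℤ) * m, ?_⟩
      have : g = a * b ^ m := by rw [hm]; group
      rw [this, hswap]
  -- the candidate set of order-2 elements
  set f : Fin k → G := fun j => b ^ (2 * (j : ℕ)) * a with hf
  have hnotH : ∀ t : ℕ, b ^ t * a ∉ H := by
    intro t hmem
    apply haH
    have : a = (b ^ t)⁻¹ * (b ^ t * a) := by group
    rw [this]
    exact H.mul_mem (H.inv_mem (H.pow_mem hbH t)) hmem
  have hne1 : ∀ t : ℕ, b ^ t * a ≠ 1 := by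
    intro t h1
    exact hnotH t (h1 ▸ H.one_mem)
  have hbk1 : b ^ k ≠ 1 := by
    intro h1
    have := orderOf_dvd_iff_pow_eq_one.mpr h1
    rw [hb] at this
    have := Nat.le_of_dvd (by omega) this
    omega
  have hordbk : orderOf (b ^ k) = 2 := by
    apply orderOf_eq_prime
    · rw [← pow_mul, show k * 2 = 2 * k by ring, hb2k]
    · exact hbk1
  have hordfj : ∀ j : Fin k, orderOf (f j) = 2 := by
    intro j
    apply orderOf_eq_prime
    · show (b ^ (2 * (j : ℕ)) * a) ^ 2 = 1
      rw [pow_two]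
      have hcv : b ^ (2 * (j : ℕ)) = b ^ ((2 * (j : ℕ) : ℕ) : ℤ) := (zpow_natCast b _).symm
      rw [hcv, hsq, hbz]
      exact ⟨(j : ℕ), by push_cast; ring⟩
    · exact hne1 _
  -- the set equality
  have hset : {g : G | orderOf g = 2} = insert (b ^ k) (Set.range f) := by
    ext g
    simp only [Set.mem_setOf_eq, Set.mem_insert_iff, Set.mem_range]
    constructor
    · intro hg
      have hg2 : g * g = 1 := by rw [← pow_two, ← hg]; exact pow_orderOf_eq_one g
      have hg1 : g ≠ 1 := by
        intro h1
        rw [h1, orderOf_one] at hg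
        omega
      by_cases hgH : g ∈ H
      · left
        obtain ⟨m, rfl⟩ := Subgroup.mem_zpowers_iff.mp hgH
        rw [← zpow_add] at hg2
        rw [hbz] at hg2
        obtain ⟨c, hc⟩ := hg2
        have hm : m = (k : ℤ) * c := by linarith
        have hbk : (b ^ k : G) = b ^ ((k : ℕ) : ℤ) := (zpow_natCast b k).symm
        have hb2kz : b ^ ((2 * k : ℕ) : ℤ) = 1 := by rw [zpow_natCast, hb2k]
        rcases Int.even_or_odd c with ⟨u, hu⟩ | ⟨u, hu⟩
        · exfalso
          apply hg1
          rw [hm, hu, show (k : ℤ) * (u + u) = ((2 * k : ℕ) : ℤ) * u by push_cast; ring,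
            zpow_mul, hb2kz, one_zpow]
        · rw [hm, hu, show (k : ℤ) * (2 * u + 1) = ((2 * k : ℕ) : ℤ) * u + ((k : ℕ) : ℤ) by
            push_cast; ring, zpow_add, zpow_mul, hb2kz, one_zpow, one_mul, zpow_natCast]
      · right
        obtain ⟨t, rfl⟩ := hform g hgH
        rw [hsq, hbz] at hg2
        have ht2 : (2 : ℤ) ∣ t := by
          obtain ⟨c, hc⟩ := hg2
          refine ⟨c, ?_⟩
          have : t * (k : ℤ) = (2 * c) * (k : ℤ) := by linarith
          exact mul_right_cancel₀ hk0 this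
        obtain ⟨s, hs⟩ := ht2
        have hkpos : (0 : ℤ) < (k : ℤ) := by positivity
        set r : ℤ := s % (k : ℤ) with hr
        have hr0 : 0 ≤ r := Int.emod_nonneg s hk0
        have hrk : r < (k : ℤ) := Int.emod_lt_of_pos s hkpos
        have hdm := Int.mul_ediv_add_emod s (k : ℤ)
        refine ⟨⟨r.toNat, by omega⟩, ?_⟩
        have hrt : ((r.toNat : ℕ) : ℤ) = r := Int.toNat_of_nonneg hr0
        have hb2kz : b ^ ((2 * k : ℕ) : ℤ) = 1 := by rw [zpow_natCast, hb2k]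
        have hbt : b ^ t = b ^ (2 * r.toNat) := by
          have h1 : b ^ (2 * r.toNat) = b ^ ((2 * r.toNat : ℕ) : ℤ) := (zpow_natCast b _).symm
          rw [h1, show t = ((2 * r.toNat : ℕ) : ℤ) + ((2 * k : ℕ) : ℤ) * (s / (k : ℤ)) by
            push_cast [hrt]; linarith, zpow_add, zpow_mul, hb2kz, one_zpow, mul_one]
        show b ^ (2 * r.toNat) * a = b ^ t * a
        rw [hbt]
    · rintro (rfl | ⟨j, rfl⟩)
      · exact hordbk
      · exact hordfj j
  -- b^k is not of the form b^(2j) * a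
  have hbknot : b ^ k ∉ Set.range f := by
    rintro ⟨j, hj⟩
    simp only [hf] at hj
    exact hnotH (2 * (j : ℕ)) (by rw [hj]; exact H.pow_mem hbH k)
  -- f is injective
  have hinj : Function.Injective f := by
    intro i j hij
    simp only [hf] at hij
    have h1 : b ^ (2 * (i : ℕ)) = b ^ (2 * (j : ℕ)) := mul_right_cancel hij
    rw [pow_eq_pow_iff_modEq, hb] at h1
    have h2 : (i : ℕ) ≡ (j : ℕ) [MOD k] := Nat.ModEq.mul_left_cancel' (by norm_num) h1
    have h3 : (i : ℕ) % k = (j : ℕ) % k := h2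
    have hik : (i : ℕ) < k := i.isLt
    have hjk : (j : ℕ) < k := j.isLt
    apply Fin.ext
    rwa [Nat.mod_eq_of_lt hik, Nat.mod_eq_of_lt hjk] at h3
  -- count
  calc Nat.card {g : G // orderOf g = 2}
      = Nat.card (insert (b ^ k) (Set.range f) : Set G) :=
        Nat.card_congr (Equiv.setCongr hset)
    _ = (insert (b ^ k) (Set.range f) : Set G).ncard := Nat.card_coe_set_eq _
    _ = (Set.range f).ncard + 1 := Set.ncard_insert_of_notMem hbknot (Set.toFinite _)
    _ = k + 1 := by
        rw [← Nat.card_coe_set_eq, Nat.card_range_of_injective hinj, Nat.card_eq_fintype_card,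
          Fintype.card_fin]
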